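/- Let (W,S) be a Coxeter system, L = I∪J∪K with I,J,K pairwise disjoint and disconnected, σ : W_I → W_J, x ↦ x* a Coxeter isomorphism, and M the set of all elements minimal in their coset modulo W_K W_{I,J}. If w ∈ M and y ∈ W satisfy y_L ≤_R w_L (right weak order on the W_L-parts of the parabolic decompositions), then y ∈ M. -/

import Mathlib

section BruhatSetup

variable {B : Type*} {W : Type*} [Group W] {M : CoxeterMatrix B}

/-- Strong Bruhat order: `u ≤ v` iff every reduced word for `v` has a sublist
that is a reduced word for `u`. -/
def BruhatLE (cs : CoxeterSystem M W) (u v : W) : Prop :=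
  ∀ ω : List B, cs.IsReduced ω → cs.wordProd ω = v →
    ∃ ω' : List B, List.Sublist ω' ω ∧ cs.IsReduced ω' ∧ cs.wordProd ω' = u

/-- Strict strong Bruhat order. -/
def BruhatLT (cs : CoxeterSystem M W) (u v : W) : Prop :=
  BruhatLE cs u v ∧ u ≠ v

/-- The standard parabolic subgroup `W_L` generated by the simple reflections in `L`. -/
def parab (cs : CoxeterSystem M W) (L : Set B) : Subgroup W :=
  Subgroup.closure (cs.simple '' L)

/-- The set `W^L` of minimal length coset representatives for `W / W_L`. -/
def minReps (cs : CoxeterSystem M W) (L : Set B) : Set W :=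
  {w : W | ∀ i ∈ L, cs.length w < cs.length (w * cs.simple i)}

/-- Right weak order: `v ≤_R w` iff `ℓ(w) = ℓ(w v⁻¹) + ℓ(v)`. -/
def leR (cs : CoxeterSystem M W) (v w : W) : Prop :=
  cs.length w = cs.length (w * v⁻¹) + cs.length v

/-- The setup of the order `≤_O`: `I`, `J`, `K` are pairwise disjoint and pairwise
disconnected subsets of the simple system (so that `W_{I∪J∪K} = W_I × W_J × W_K`),
and `σ : x ↦ x*` restricts to an isomorphism of Coxeter groups `W_I → W_J`
(a bijective group homomorphism sending simple reflections to simple reflections). -/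
structure GoodSetup (cs : CoxeterSystem M W) (I J K : Set B) (σ : W → W) : Prop where
  disjIJ : Disjoint I J
  disjIK : Disjoint I K
  disjJK : Disjoint J K
  commIJ : ∀ i ∈ I, ∀ j ∈ J, Commute (cs.simple i) (cs.simple j)
  commIK : ∀ i ∈ I, ∀ k ∈ K, Commute (cs.simple i) (cs.simple k)
  commJK : ∀ j ∈ J, ∀ k ∈ K, Commute (cs.simple j) (cs.simple k)
  directProd : ∀ x ∈ parab cs I, ∀ y ∈ parab cs J, ∀ z ∈ parab cs K,
    x * y * z = 1 → x = 1 ∧ y = 1 ∧ z = 1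
  mulSigma : ∀ x ∈ parab cs I, ∀ y ∈ parab cs I, σ (x * y) = σ x * σ y
  bijSigma : Set.BijOn σ (parab cs I : Set W) (parab cs J : Set W)
  simpleSigma : ∀ i ∈ I, ∃ j ∈ J, σ (cs.simple i) = cs.simple j

/-- Membership in the coset `[w] = w · W_K · W_{I,J}` where `W_{I,J} = {x x* : x ∈ W_I}`. -/
def inCoset (cs : CoxeterSystem M W) (I K : Set B) (σ : W → W) (w u : W) : Prop :=
  ∃ a ∈ parab cs K, ∃ x ∈ parab cs I, u = w * a * (x * σ x)

/-- The relation `≤_O`: `w' ≤_O w` iff some `u ∈ [w']` satisfies `u ≤ w` in Bruhat order. -/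
def leO (cs : CoxeterSystem M W) (I K : Set B) (σ : W → W) (w' w : W) : Prop :=
  ∃ u, inCoset cs I K σ w' u ∧ BruhatLE cs u w

/-- The strict relation associated to `≤_O`. -/
def ltO (cs : CoxeterSystem M W) (I K : Set B) (σ : W → W) (w' w : W) : Prop :=
  leO cs I K σ w' w ∧ w' ≠ w

/-- `Min(w)`: the elements of the coset `[w]` of length `ℓ(w)`. -/
def MinC (cs : CoxeterSystem M W) (I K : Set B) (σ : W → W) (w : W) : Set W :=
  {u : W | inCoset cs I K σ w u ∧ cs.length u = cs.length w}

/-- The set `M` of all elements having minimal length in their coset mod `W_K W_{I,J}`. -/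
def Mset (cs : CoxeterSystem M W) (I J K : Set B) (σ : W → W) : Set W :=
  {u : W | ∃ w ∈ minReps cs (J ∪ K), u ∈ MinC cs I K σ w}

namespace CoxAux

open CoxeterSystem List

variable {B : Type*} {W : Type*} [Group W] {M : CoxeterMatrix B} (cs : CoxeterSystem M W)

local prefix:100 "s" => cs.simple
local prefix:100 "π" => cs.wordProd
local prefix:100 "ℓ" => cs.length

attribute [local instance] Classical.propDecidable

/-! ### The sign representation on `W × ℤˣ` -/

noncomputable def eta (i : B) : W × ℤˣ → W × ℤˣ :=
  fun p => (s i * p.1 * s i, if p.1 = s i then -p.2 else p.2)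

lemma eta_involutive (i : B) : Function.Involutive (eta cs i) := by
  rintro ⟨t, ε⟩
  have h1 : s i * (s i * t * s i) * s i = t := by
    have : s i * (s i * t * s i) * s i = (s i * s i) * t * (s i * s i) := by group
    rw [this, cs.simple_mul_simple_self]; group
  have h2 : (s i * t * s i = s i) ↔ (t = s i) := by
    constructor
    · intro h
      have := congrArg (fun g => s i * g * s i) h
      rw [h1] at this
      rw [this]
      have : s i * s i * s i = (s i * s i) * s i := by group
      rw [this, cs.simple_mul_simple_self, one_mul]
    · rintro rfl
      rw [cs.simple_mul_simple_self, one_mul]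
  simp only [eta, h1]
  by_cases h : t = s i
  · simp [h, h2.mpr h, cs.simple_mul_simple_self]
  · simp [h, h2, if_neg]

noncomputable def Phi : List B → (W × ℤˣ) → (W × ℤˣ) :=
  fun ω => ω.foldr (fun i f => eta cs i ∘ f) id

lemma Phi_nil : Phi cs [] = id := rfl

lemma Phi_cons (i : B) (ω : List B) : Phi cs (i :: ω) = eta cs i ∘ Phi cs ω := rfl

lemma conj_eq_simple_iff (a t x : W) : a * t * a⁻¹ = x ↔ t = a⁻¹ * x * a := by
  constructor
  · rintro rfl; group
  · rintro rfl; group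

lemma Phi_apply (ω : List B) (t : W) (ε : ℤˣ) :
    Phi cs ω (t, ε) = (π ω * t * (π ω)⁻¹, ε * (-1 : ℤˣ) ^ ((cs.rightInvSeq ω).count t)) := by
  induction ω with
  | nil => simp [Phi]
  | cons i ω ih =>
    rw [Phi_cons, Function.comp_apply, ih]
    have hris : cs.rightInvSeq (i :: ω) = ((π ω)⁻¹ * s i * π ω) :: cs.rightInvSeq ω := rfl
    rw [hris, cs.wordProd_cons]
    simp only [eta]
    have hfst : s i * (π ω * t * (π ω)⁻¹) * s i = s i * π ω * t * (s i * π ω)⁻¹ := by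
      rw [mul_inv_rev, cs.inv_simple]; group
    by_cases h : π ω * t * (π ω)⁻¹ = s i
    · have ht : t = (π ω)⁻¹ * s i * π ω := (conj_eq_simple_iff _ _ _).mp h
      rw [if_pos h, List.count_cons, if_pos (by simp [beq_iff_eq, ht])]
      rw [Prod.mk.injEq]
      refine ⟨hfst, ?_⟩
      rw [pow_succ, mul_neg_one, mul_neg]
    · have ht : ¬ t = (π ω)⁻¹ * s i * π ω := fun hh => h ((conj_eq_simple_iff _ _ _).mpr hh)
      rw [if_neg h, List.count_cons,
        if_neg (by simp only [beq_iff_eq]; exact fun hh => ht hh.symm)]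
      rw [Prod.mk.injEq]
      exact ⟨hfst, by rw [Nat.add_zero]⟩


/-! ### Braid relations for `eta` -/

section BraidCalc

def Sf (u v : W) (n : ℕ) : W := if n % 2 = 0 then v else u

def Pf (u v : W) : ℕ → W
  | 0 => 1
  | n + 1 => Sf u v n * Pf u v n

variable {u v : W}

lemma semiconj_u (u v : W) (k : ℕ) : u * (v * u) ^ k = (u * v) ^ k * u :=
  (SemiconjBy.pow_right (by simp [SemiconjBy, mul_assoc]) k).eq

lemma Pf_even (u v : W) (k : ℕ) : Pf u v (2 * k) = (u * v) ^ k := by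
  induction k with
  | zero => simp [Pf]
  | succ k ih =>
    have h2 : 2 * (k + 1) = (2 * k + 1) + 1 := by omega
    rw [h2]
    show Sf u v (2 * k + 1) * (Sf u v (2 * k) * Pf u v (2 * k)) = _
    rw [ih]
    simp only [Sf, Nat.mul_add_mod, Nat.mul_mod_right]
    norm_num
    rw [pow_succ']
    group

lemma Pf_odd (u v : W) (k : ℕ) : Pf u v (2 * k + 1) = v * (u * v) ^ k := by
  show Sf u v (2 * k) * Pf u v (2 * k) = _
  rw [Pf_even]
  simp [Sf, Nat.mul_mod_right]

section Rel

variable (hu : u * u = 1) (hv : v * v = 1)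
include hu hv

lemma u_inv : u⁻¹ = u := by
  rw [← mul_one u⁻¹, ← hu, ← mul_assoc, inv_mul_cancel, one_mul]

lemma v_inv : v⁻¹ = v := by
  rw [← mul_one v⁻¹, ← hv, ← mul_assoc, inv_mul_cancel, one_mul]

lemma uv_inv : (u * v)⁻¹ = v * u := by
  rw [mul_inv_rev, u_inv hu hv, v_inv hu hv]

lemma vu_pow_eq_inv (k : ℕ) : (v * u) ^ k = ((u * v) ^ k)⁻¹ := by
  rw [← uv_inv hu hv, inv_pow]

variable {m : ℕ} (hm : (u * v) ^ m = 1)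
include hm

lemma key_comm (n : ℕ) : Pf u v m * Sf u v n = Sf u v (n + m) * Pf u v m := by
  rcases Nat.even_or_odd m with ⟨q, hq⟩ | ⟨q, hq⟩
  · -- m = q + q
    have hq2 : m = 2 * q := by omega
    subst hq2
    have hSF : Sf u v (n + 2 * q) = Sf u v n := by
      simp [Sf, Nat.add_mul_mod_self_left]
    rw [hSF, Pf_even]
    -- (u*v)^q commutes with both u and v
    have hsq : (v * u) ^ q = (u * v) ^ q := by
      rw [vu_pow_eq_inv hu hv]
      have h2 : (u * v) ^ q * (u * v) ^ q = 1 := by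
        rw [← pow_add]; exact (by rw [two_mul] at hm; exact hm)
      rw [inv_eq_of_mul_eq_one_right h2]
    rcases Nat.even_or_odd n with hn | hn
    · have : Sf u v n = v := by simp [Sf, Nat.even_iff.mp hn]
      rw [this]
      -- (u*v)^q * v = v * (u*v)^q
      have h3 : v * (u * v) ^ q = (v * u) ^ q * v :=
        (SemiconjBy.pow_right (by simp [SemiconjBy, mul_assoc]) q).eq
      rw [← hsq, ← h3, hsq]
    · have : Sf u v n = u := by simp [Sf, Nat.odd_iff.mp hn]
      rw [this]
      have h3 : u * (v * u) ^ q = (u * v) ^ q * u := semiconj_u u v q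
      rw [← h3, hsq]
  · -- m = 2q + 1
    subst hq
    have hSFn : Sf u v (n + (2 * q + 1)) = (if n % 2 = 0 then u else v) := by
      rcases Nat.even_or_odd n with hn | hn
      · have h0 : n % 2 = 0 := Nat.even_iff.mp hn
        have h1 : (n + (2 * q + 1)) % 2 = 1 := by omega
        simp [Sf, h0, h1]
      · have h0 : n % 2 = 1 := Nat.odd_iff.mp hn
        have h1 : (n + (2 * q + 1)) % 2 = 0 := by omega
        simp [Sf, h0, h1]
    rw [Pf_odd, hSFn]
    have hp1 : ((u * v) ^ q)⁻¹ = (u * v) ^ (q + 1) := by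
      apply inv_eq_of_mul_eq_one_right
      rw [← pow_add, (by omega : q + (q + 1) = 2 * q + 1)]
      exact hm
    have hvu : (v * u) ^ q = (u * v) ^ (q + 1) := by
      rw [vu_pow_eq_inv hu hv, hp1]
    have hsemiv : v * (u * v) ^ q = (v * u) ^ q * v :=
      (SemiconjBy.pow_right (by simp [SemiconjBy, mul_assoc]) q).eq
    rcases Nat.even_or_odd n with hn | hn
    · have h0 : n % 2 = 0 := Nat.even_iff.mp hn
      rw [if_pos h0]
      have hSn : Sf u v n = v := by simp [Sf, h0]
      rw [hSn]
      calc v * (u * v) ^ q * v = (v * u) ^ q * v * v := by rw [hsemiv]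
        _ = (v * u) ^ q * (v * v) := by group
        _ = (v * u) ^ q := by rw [hv, mul_one]
        _ = (u * v) ^ (q + 1) := hvu
        _ = u * (v * (u * v) ^ q) := by rw [pow_succ']; group
    · have h0 : n % 2 = 1 := Nat.odd_iff.mp hn
      rw [if_neg (by omega)]
      have hSn : Sf u v n = u := by simp [Sf, h0]
      rw [hSn]
      have hsemiu : (u * v) ^ q * u = u * (v * u) ^ q := (semiconj_u u v q).symm
      have hvu1 : (v * u) ^ (q + 1) = (u * v) ^ q := by
        rw [vu_pow_eq_inv hu hv, ← hp1, inv_inv]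
      calc v * (u * v) ^ q * u = v * ((u * v) ^ q * u) := by group
        _ = v * (u * (v * u) ^ q) := by rw [hsemiu]
        _ = (v * u) ^ (q + 1) := by rw [pow_succ']; group
        _ = (u * v) ^ q := hvu1
        _ = v * (v * (u * v) ^ q) := by rw [← mul_assoc, hv, one_mul]

lemma Pf_shift : ∀ n, Pf u v (n + m) = Pf u v m * Pf u v n := by
  intro n
  induction n with
  | zero => simp [Pf]
  | succ n ih =>
    have h1 : n + 1 + m = (n + m) + 1 := by omega
    rw [h1]
    show Sf u v (n + m) * Pf u v (n + m) = Pf u v m * (Sf u v n * Pf u v n)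
    rw [ih, ← mul_assoc, ← key_comm hu hv hm n, mul_assoc]

lemma g_period (n : ℕ) :
    (Pf u v (n + m))⁻¹ * Sf u v (n + m) * Pf u v (n + m)
      = (Pf u v n)⁻¹ * Sf u v n * Pf u v n := by
  rw [Pf_shift hu hv hm n]
  have hk : Sf u v (n + m) = Pf u v m * Sf u v n * (Pf u v m)⁻¹ :=
    eq_mul_inv_of_mul_eq (key_comm hu hv hm n).symm
  rw [hk]
  group

end Rel

end BraidCalc

/-! ### The homomorphism `phi` -/

def awL (i j : B) : ℕ → List B
  | 0 => []
  | n + 1 => (if n % 2 = 0 then j else i) :: awL i j n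

lemma wordProd_awL (i j : B) (n : ℕ) : π (awL i j n) = Pf (s i) (s j) n := by
  induction n with
  | zero => simp [awL, Pf, cs.wordProd_nil]
  | succ n ih =>
    show π ((if n % 2 = 0 then j else i) :: awL i j n) = Sf (s i) (s j) n * Pf (s i) (s j) n
    rw [cs.wordProd_cons, ih, Sf, apply_ite cs.simple]

lemma ris_awL (i j : B) (n : ℕ) :
    cs.rightInvSeq (awL i j n) = (List.range n).reverse.map
      (fun k => (Pf (s i) (s j) k)⁻¹ * Sf (s i) (s j) k * Pf (s i) (s j) k) := by
  induction n with
  | zero => simp [awL]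
  | succ n ih =>
    show cs.rightInvSeq ((if n % 2 = 0 then j else i) :: awL i j n) = _
    have hcons : cs.rightInvSeq ((if n % 2 = 0 then j else i) :: awL i j n)
        = ((π (awL i j n))⁻¹ * s (if n % 2 = 0 then j else i) * π (awL i j n))
            :: cs.rightInvSeq (awL i j n) := rfl
    rw [hcons, ih, List.range_succ, List.reverse_append]
    simp only [List.reverse_singleton, List.singleton_append, List.map_cons]
    congr 1
    rw [wordProd_awL, apply_ite cs.simple]
    rfl

lemma count_double {A : Type*} [DecidableEq A] (f : ℕ → A) (m : ℕ)
    (hper : ∀ k, f (k + m) = f k) (t : A) :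
    Even (List.count t (((List.range (2 * m)).reverse).map f)) := by
  have h0 : (List.range (2 * m)).reverse.map f = ((List.range (2 * m)).map f).reverse := by
    rw [List.map_reverse]
  rw [h0, List.count_reverse, two_mul, List.range_add, List.map_append, List.count_append,
    List.map_map]
  have h1 : List.map (f ∘ (fun i => m + i)) (List.range m) = List.map f (List.range m) := by
    apply List.map_congr_left
    intro k _
    show f (m + k) = f k
    rw [Nat.add_comm]
    exact hper k
  rw [h1]
  exact ⟨_, rfl⟩

lemma count_awL_even (i j : B) (t : W) :
    Even (List.count t (cs.rightInvSeq (awL i j (2 * M i j)))) := by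
  rw [ris_awL]
  have hu : s i * s i = 1 := cs.simple_mul_simple_self i
  have hv : s j * s j = 1 := cs.simple_mul_simple_self j
  have hm : (s i * s j) ^ M i j = 1 := cs.simple_mul_simple_pow i j
  exact count_double _ (M i j) (fun k => g_period hu hv hm k) t

noncomputable def fP (i : B) : Equiv.Perm (W × ℤˣ) :=
  Function.Involutive.toPerm (eta cs i) (eta_involutive cs i)

lemma fP_apply (i : B) (x : W × ℤˣ) : fP cs i x = eta cs i x := rfl

lemma pow_fP_eq_Phi (i j : B) (n : ℕ) (x : W × ℤˣ) :
    ((fP cs i * fP cs j) ^ n) x = Phi cs (awL i j (2 * n)) x := by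
  induction n generalizing x with
  | zero => simp [Phi, awL]
  | succ n ih =>
    have h2 : 2 * (n + 1) = (2 * n + 1) + 1 := by omega
    rw [pow_succ']
    have haw : awL i j (2 * (n + 1)) = i :: j :: awL i j (2 * n) := by
      rw [h2]
      simp only [awL, Nat.mul_add_mod, Nat.mul_mod_right]
      norm_num
    rw [haw, Phi_cons, Phi_cons]
    simp only [Equiv.Perm.mul_apply, Function.comp_apply]
    rw [ih]
    rfl

lemma liftable : M.IsLiftable (fun i => fP cs i) := by
  intro i j
  apply Equiv.ext
  rintro ⟨t, ε⟩
  rw [Equiv.Perm.one_apply]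
  show ((fP cs i * fP cs j) ^ M i j) (t, ε) = (t, ε)
  rw [pow_fP_eq_Phi, Phi_apply, wordProd_awL, Pf_even, cs.simple_mul_simple_pow i j]
  have he := count_awL_even cs i j t
  rw [ris_awL] at he ⊢
  rw [Even.neg_one_pow he]
  simp

noncomputable def phi : W →* Equiv.Perm (W × ℤˣ) :=
  cs.lift ⟨fun i => fP cs i, liftable cs⟩

lemma phi_simple (i : B) : phi cs (s i) = fP cs i :=
  cs.lift_apply_simple (liftable cs) i

lemma phi_wordProd (ω : List B) (x : W × ℤˣ) : phi cs (π ω) x = Phi cs ω x := by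
  induction ω generalizing x with
  | nil => simp [Phi, cs.wordProd_nil]
  | cons i ω ih =>
    rw [cs.wordProd_cons, map_mul, Phi_cons, Equiv.Perm.mul_apply, phi_simple, ih]
    rfl

noncomputable def sgn (w t : W) : ℤˣ := (phi cs w (t, 1)).2

lemma sgn_word (ω : List B) (t : W) :
    sgn cs (π ω) t = (-1 : ℤˣ) ^ ((cs.rightInvSeq ω).count t) := by
  rw [sgn, phi_wordProd, Phi_apply, one_mul]

lemma phi_apply (w t : W) (ε : ℤˣ) : phi cs w (t, ε) = (w * t * w⁻¹, ε * sgn cs w t) := by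
  obtain ⟨ω, rfl⟩ : ∃ ω, π ω = w := cs.wordProd_surjective w
  rw [phi_wordProd, Phi_apply, sgn_word]

lemma phi_refl_self (t : W) (ht : cs.IsReflection t) (ε : ℤˣ) :
    phi cs t (t, ε) = (t, -ε) := by
  obtain ⟨v, i, rfl⟩ := ht
  set t := v * s i * v⁻¹ with hts
  have h1 : phi cs (v⁻¹) (t, ε) = (s i, ε * sgn cs v⁻¹ t) := by
    rw [phi_apply]
    congr 1
    rw [hts]; group
  set ε' : ℤˣ := ε * sgn cs v⁻¹ t with he'
  have hsplit : phi cs t = phi cs v * (phi cs (s i) * phi cs (v⁻¹)) := by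
    rw [hts, mul_assoc, map_mul, map_mul]
  have h2 : phi cs (s i) (s i, ε') = (s i, -ε') := by
    rw [phi_simple, fP_apply, eta]
    simp only [if_pos rfl]
    rw [Prod.mk.injEq]
    refine ⟨?_, rfl⟩
    rw [cs.simple_mul_simple_self, one_mul]
  have h3 : phi cs v (s i, ε') = (t, ε) := by
    have h : phi cs v (phi cs (v⁻¹) (t, ε)) = (t, ε) := by
      rw [← Equiv.Perm.mul_apply, ← map_mul, mul_inv_cancel, map_one, Equiv.Perm.one_apply]
    rwa [h1] at h
  have h4 : phi cs v (s i, ε') = (v * s i * v⁻¹, ε' * sgn cs v (s i)) := phi_apply ..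
  have h5 : ε' * sgn cs v (s i) = ε := by
    have h := h3.symm.trans h4
    exact (congrArg Prod.snd h).symm
  rw [hsplit]
  show phi cs v ((phi cs (s i)) ((phi cs v⁻¹) (t, ε))) = _
  rw [h1, h2, phi_apply, Prod.mk.injEq]
  exact ⟨by rw [hts], by rw [neg_mul, h5]⟩

lemma units_neg_one_pow_eq_neg_one_iff (n : ℕ) :
    ((-1 : ℤˣ) ^ n = -1) ↔ Odd n := by
  rcases Nat.even_or_odd n with h | h
  · rw [Even.neg_one_pow h]
    constructor
    · intro hh; exact absurd hh (by decide)
    · intro hh; exact absurd hh (Nat.not_odd_iff_even.mpr h)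
  · rw [Odd.neg_one_pow h]
    exact ⟨fun _ => h, fun _ => rfl⟩

lemma length_mul_lt_of_sgn_neg (w t : W) (hs : sgn cs w t = -1) : ℓ (w * t) < ℓ w := by
  obtain ⟨ω, hred, rfl⟩ := cs.exists_reduced_word' w
  rw [sgn_word, units_neg_one_pow_eq_neg_one_iff] at hs
  exact (cs.isRightInversion_of_mem_rightInvSeq hred (List.count_pos_iff.mp hs.pos)).2

lemma sgn_neg_iff (w t : W) (ht : cs.IsReflection t) :
    sgn cs w t = -1 ↔ ℓ (w * t) < ℓ w := by
  constructor
  · exact length_mul_lt_of_sgn_neg cs w t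
  · intro hlt
    by_contra hne
    have hone : sgn cs w t = 1 := (Int.units_eq_one_or _).resolve_right hne
    have h1 : sgn cs (w * t) t = -1 := by
      rw [sgn, map_mul, Equiv.Perm.mul_apply, phi_refl_self cs t ht, phi_apply, hone]
      simp
    have h3 := length_mul_lt_of_sgn_neg cs (w * t) t h1
    rw [mul_assoc, ht.mul_self, mul_one] at h3
    omega

/-! ### Strong exchange and deletion -/

lemma strong_exchange (ω : List B) (t : W) (ht : cs.IsReflection t)
    (hlt : ℓ (π ω * t) < ℓ (π ω)) :
    ∃ j, ∃ hj : j < ω.length, π ω * t = π (ω.eraseIdx j) := by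
  have hs : sgn cs (π ω) t = -1 := by
    obtain ⟨ω', hred, heq⟩ := cs.exists_reduced_word' (π ω)
    rw [heq, sgn_word, units_neg_one_pow_eq_neg_one_iff]
    rw [heq] at hlt
    by_contra hodd
    have h1 : sgn cs (π ω') t = -1 := (sgn_neg_iff cs (π ω') t ht).mpr hlt
    rw [sgn_word, units_neg_one_pow_eq_neg_one_iff] at h1
    exact hodd h1
  rw [sgn_word, units_neg_one_pow_eq_neg_one_iff] at hs
  have hmem : t ∈ cs.rightInvSeq ω := List.count_pos_iff.mp hs.pos
  obtain ⟨j, hj, hget⟩ := List.mem_iff_getElem.mp hmem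
  rw [cs.length_rightInvSeq] at hj
  refine ⟨j, hj, ?_⟩
  have := cs.wordProd_mul_getD_rightInvSeq ω j
  rwa [List.getD_eq_getElem _ _ (by rwa [cs.length_rightInvSeq]), hget] at this

lemma exists_reduced_sublist (ω : List B) :
    ∃ ω', ω'.Sublist ω ∧ cs.IsReduced ω' ∧ π ω' = π ω := by
  suffices H : ∀ n (ω : List B), ω.length ≤ n →
      ∃ ω', ω'.Sublist ω ∧ cs.IsReduced ω' ∧ π ω' = π ω from H ω.length ω le_rfl
  intro n
  induction n with
  | zero =>
    intro ω hlen
    rw [Nat.le_zero, List.length_eq_zero_iff] at hlen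
    subst hlen
    exact ⟨[], List.Sublist.refl _, by simp [CoxeterSystem.IsReduced], rfl⟩
  | succ n ih =>
    intro ω hlen
    rcases List.eq_nil_or_concat ω with rfl | ⟨ω₀, b, rfl⟩
    · exact ⟨[], List.Sublist.refl _, by simp [CoxeterSystem.IsReduced], rfl⟩
    · obtain ⟨ω₀', hsub, hred, hprod⟩ := ih ω₀ (by
        rw [List.concat_eq_append, List.length_append] at hlen
        simp at hlen; omega)
      have hπ : π (ω₀.concat b) = π ω₀' * s b := by
        rw [List.concat_eq_append, cs.wordProd_append, cs.wordProd_singleton, hprod]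
      by_cases hr : cs.IsReduced (ω₀' ++ [b])
      · refine ⟨ω₀' ++ [b], ?_, hr, ?_⟩
        · rw [List.concat_eq_append]
          exact hsub.append (List.Sublist.refl [b])
        · rw [cs.wordProd_append, cs.wordProd_singleton, hπ]
      · have hlred : ℓ (π ω₀') = ω₀'.length := hred
        have hlt : ℓ (π ω₀' * s b) < ℓ (π ω₀') := by
          rcases cs.length_mul_simple (π ω₀') b with h | h
          · exfalso
            apply hr
            show ℓ (π (ω₀' ++ [b])) = (ω₀' ++ [b]).length
            rw [cs.wordProd_append, cs.wordProd_singleton, h, hlred]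
            simp
          · omega
        obtain ⟨j, hj, heq⟩ :=
          strong_exchange cs ω₀' (s b) (cs.isReflection_simple b) hlt
        obtain ⟨ω', h2, h3, h4⟩ := ih (ω₀'.eraseIdx j) (by
          have h5 := List.length_eraseIdx_add_one hj
          have h6 := hsub.length_le
          rw [List.concat_eq_append, List.length_append] at hlen
          simp at hlen
          omega)
        refine ⟨ω', ?_, h3, ?_⟩
        · refine h2.trans ((List.eraseIdx_sublist ω₀' j).trans (hsub.trans ?_))
          rw [List.concat_eq_append]
          exact List.sublist_append_left ω₀ [b]
        · rw [h4, ← heq, ← hπ]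

/-! ### Parabolic subgroups -/

lemma simple_mem_parab {L : Set B} {i : B} (hi : i ∈ L) : s i ∈ parab cs L :=
  Subgroup.subset_closure ⟨i, hi, rfl⟩

lemma parab_mono {L₁ L₂ : Set B} (h : L₁ ⊆ L₂) : parab cs L₁ ≤ parab cs L₂ :=
  Subgroup.closure_mono (Set.image_mono h)

lemma wordProd_mem_parab {L : Set B} {ω : List B} (h : ∀ b ∈ ω, b ∈ L) :
    π ω ∈ parab cs L := by
  induction ω with
  | nil => rw [cs.wordProd_nil]; exact one_mem _
  | cons i ω ih =>
    rw [cs.wordProd_cons]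
    exact mul_mem (simple_mem_parab cs (h i List.mem_cons_self))
      (ih fun b hb => h b (List.mem_cons_of_mem i hb))

lemma exists_word_parab {L : Set B} {w : W} (hw : w ∈ parab cs L) :
    ∃ ω : List B, (∀ b ∈ ω, b ∈ L) ∧ π ω = w := by
  induction hw using Subgroup.closure_induction with
  | mem x hx =>
    obtain ⟨i, hi, rfl⟩ := hx
    exact ⟨[i], by simpa using hi, cs.wordProd_singleton i⟩
  | one => exact ⟨[], by simp, cs.wordProd_nil⟩
  | mul x y hx hy ihx ihy =>
    obtain ⟨ω₁, h1, rfl⟩ := ihx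
    obtain ⟨ω₂, h2, rfl⟩ := ihy
    exact ⟨ω₁ ++ ω₂, by
      intro b hb
      rcases List.mem_append.mp hb with h | h
      exacts [h1 b h, h2 b h], cs.wordProd_append ω₁ ω₂⟩
  | inv x hx ihx =>
    obtain ⟨ω, h1, rfl⟩ := ihx
    exact ⟨ω.reverse, fun b hb => h1 b (List.mem_reverse.mp hb), cs.wordProd_reverse ω⟩

lemma exists_reduced_word_parab {L : Set B} {w : W} (hw : w ∈ parab cs L) :
    ∃ ω : List B, (∀ b ∈ ω, b ∈ L) ∧ cs.IsReduced ω ∧ π ω = w := by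
  obtain ⟨ω, h1, h2⟩ := exists_word_parab cs hw
  obtain ⟨ω', hsub, hred, hprod⟩ := exists_reduced_sublist cs ω
  exact ⟨ω', fun b hb => h1 b (hsub.subset hb), hred, by rw [hprod, h2]⟩

lemma parab_right_descent {L : Set B} {w : W} (hw : w ∈ parab cs L) (hw1 : w ≠ 1) :
    ∃ i ∈ L, ∃ w', w' ∈ parab cs L ∧ w = w' * s i ∧ ℓ w = ℓ w' + 1 := by
  obtain ⟨ω, hL, hred, hprod⟩ := exists_reduced_word_parab cs hw
  rcases List.eq_nil_or_concat ω with rfl | ⟨ω₀, i, rfl⟩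
  · exact absurd (by rw [← hprod, cs.wordProd_nil]) hw1
  · rw [List.concat_eq_append] at *
    have hω₀ : cs.IsReduced ω₀ := by
      have := hred.take ω₀.length
      rwa [List.take_left] at this
    refine ⟨i, hL i (by simp), π ω₀, wordProd_mem_parab cs fun b hb => hL b (by simp [hb]), ?_, ?_⟩
    · rw [← hprod, cs.wordProd_append, cs.wordProd_singleton]
    · rw [← hprod]
      have e1 : ℓ (π (ω₀ ++ [i])) = ω₀.length + 1 := by
        rw [hred]; simp
      have e2 : ℓ (π ω₀) = ω₀.length := hω₀
      omega

lemma parab_commute {P Q : Set B} (hc : ∀ p ∈ P, ∀ q ∈ Q, Commute (s p) (s q)) :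
    ∀ x ∈ parab cs P, ∀ y ∈ parab cs Q, Commute x y := by
  have h1 : ∀ p ∈ P, ∀ y ∈ parab cs Q, Commute (s p) y := by
    intro p hp y hy
    induction hy using Subgroup.closure_induction with
    | mem x hx => obtain ⟨q, hq, rfl⟩ := hx; exact hc p hp q hq
    | one => exact Commute.one_right _
    | mul a b _ _ iha ihb => exact iha.mul_right ihb
    | inv a _ iha => exact iha.inv_right
  intro x hx y hy
  induction hx using Subgroup.closure_induction with
  | mem a ha => obtain ⟨p, hp, rfl⟩ := ha; exact h1 p hp y hy
  | one => exact Commute.one_left _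
  | mul a b _ _ iha ihb => exact iha.mul_left ihb
  | inv a _ iha => exact iha.inv_left

lemma parab_union_split {P Q : Set B} (hc : ∀ p ∈ P, ∀ q ∈ Q, Commute (s p) (s q)) :
    ∀ g ∈ parab cs (P ∪ Q), ∃ x ∈ parab cs P, ∃ y ∈ parab cs Q, g = x * y := by
  intro g hg
  induction hg using Subgroup.closure_induction with
  | mem a ha =>
    obtain ⟨b, hb, rfl⟩ := ha
    rcases hb with hb | hb
    · exact ⟨s b, simple_mem_parab cs hb, 1, one_mem _, (mul_one _).symm⟩
    · exact ⟨1, one_mem _, s b, simple_mem_parab cs hb, (one_mul _).symm⟩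
  | one => exact ⟨1, one_mem _, 1, one_mem _, (one_mul 1).symm⟩
  | mul a b _ _ iha ihb =>
    obtain ⟨x, hx, y, hy, rfl⟩ := iha
    obtain ⟨x', hx', y', hy', rfl⟩ := ihb
    refine ⟨x * x', mul_mem hx hx', y * y', mul_mem hy hy', ?_⟩
    have hcm : Commute x' y := parab_commute cs hc x' hx' y hy
    calc x * y * (x' * y') = x * (y * x') * y' := by group
      _ = x * (x' * y) * y' := by rw [hcm.eq]
      _ = x * x' * (y * y') := by group
  | inv a _ iha =>
    obtain ⟨x, hx, y, hy, rfl⟩ := iha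
    refine ⟨x⁻¹, inv_mem hx, y⁻¹, inv_mem hy, ?_⟩
    rw [mul_inv_rev]
    exact (parab_commute cs hc x⁻¹ (inv_mem hx) y⁻¹ (inv_mem hy)).eq.symm

/-! ### Length additivity for disconnected components -/

lemma length_add_of_disj {P Q : Set B} (hc : ∀ p ∈ P, ∀ q ∈ Q, Commute (s p) (s q))
    (hnq : ∀ b ∈ Q, s b ∉ parab cs P) :
    ∀ y ∈ parab cs Q, ∀ x ∈ parab cs P, ℓ (x * y) = ℓ x + ℓ y := by
  suffices H : ∀ n, ∀ y ∈ parab cs Q, ℓ y ≤ n → ∀ x ∈ parab cs P, ℓ (x * y) = ℓ x + ℓ y by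
    intro y hy x hx
    exact H (ℓ y) y hy le_rfl x hx
  intro n
  induction n with
  | zero =>
    intro y hy hl x hx
    have h1 : y = 1 := cs.length_eq_zero_iff.mp (Nat.le_zero.mp hl)
    subst h1
    simp
  | succ n ih =>
    intro y hy hl x hx
    by_cases hy1 : y = 1
    · subst hy1; simp
    obtain ⟨i, hiQ, y', hy', rfl, hly⟩ := parab_right_descent cs hy hy1
    have hly' : ℓ y' ≤ n := by omega
    have ihx : ℓ (x * y') = ℓ x + ℓ y' := ih y' hy' hly' x hx
    rw [← mul_assoc]
    rcases cs.length_mul_simple (x * y') i with hcase | hcase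
    · omega
    · exfalso
      obtain ⟨α, hαP, hαred, hαprod⟩ := exists_reduced_word_parab cs hx
      obtain ⟨β, hβQ, hβred, hβprod⟩ := exists_reduced_word_parab cs hy'
      have hπ : π (α ++ β) = x * y' := by rw [cs.wordProd_append, hαprod, hβprod]
      have hlα : ℓ x = α.length := by rw [← hαprod]; exact hαred
      have hlβ : ℓ y' = β.length := by rw [← hβprod]; exact hβred
      have hlt : ℓ (π (α ++ β) * s i) < ℓ (π (α ++ β)) := by
        rw [hπ]; omega
      obtain ⟨j, hj, heq⟩ := strong_exchange cs (α ++ β) (s i) (cs.isReflection_simple i) hlt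
      rw [List.length_append] at hj
      rw [hπ] at heq
      by_cases hjα : j < α.length
      · rw [List.eraseIdx_append_of_lt_length hjα, cs.wordProd_append, hβprod] at heq
        set xt := π (α.eraseIdx j) with hxt
        have hxtP : xt ∈ parab cs P :=
          wordProd_mem_parab cs fun b hb => hαP b ((List.eraseIdx_sublist α j).subset hb)
        have h1 : x⁻¹ * xt = y' * s i * y'⁻¹ := by
          have h0 : xt = x * y' * s i * y'⁻¹ := eq_mul_inv_of_mul_eq heq.symm
          rw [h0]; group
        have hmem2 : x⁻¹ * xt ∈ parab cs P := mul_mem (inv_mem hx) hxtP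
        have hcm : Commute (x⁻¹ * xt) y' := parab_commute cs hc _ hmem2 y' hy'
        have h2 : s i = x⁻¹ * xt := by
          have h3 : y' * s i = (x⁻¹ * xt) * y' := by
            rw [h1]; group
          have h4 : y' * s i = y' * (x⁻¹ * xt) := by rw [h3, hcm.eq]
          exact mul_left_cancel h4
        exact hnq i hiQ (h2 ▸ hmem2)
      · have hjge : α.length ≤ j := not_lt.mp hjα
        rw [List.eraseIdx_append_of_length_le hjge, cs.wordProd_append, hαprod] at heq
        have h1 : y' * s i = π (β.eraseIdx (j - α.length)) := by
          have := heq
          rw [mul_assoc] at this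
          exact mul_left_cancel this
        have hub := cs.length_wordProd_le (β.eraseIdx (j - α.length))
        have hlen2 := List.length_eraseIdx_add_one (show j - α.length < β.length by omega)
        rw [← h1] at hub
        omega

/-! ### Minimal coset representatives -/


/-- membership in the right coset `w (parab L)` -/
def inCosetR (L : Set B) (w g : W) : Prop := ∃ v ∈ parab cs L, w * v = g

lemma exists_min_coset (L : Set B) (w : W) :
    ∃ u, inCosetR cs L w u ∧ ∀ g, inCosetR cs L w g → ℓ u ≤ ℓ g := by
  set S : Set ℕ := {n | ∃ g, inCosetR cs L w g ∧ ℓ g = n} with hS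
  have hne : S.Nonempty := ⟨ℓ w, w, ⟨1, one_mem _, mul_one w⟩, rfl⟩
  obtain ⟨u, hu, hlu⟩ := Nat.sInf_mem hne
  refine ⟨u, hu, fun g hg => ?_⟩
  rw [hlu]
  exact Nat.sInf_le ⟨g, hg, rfl⟩

lemma min_coset_add {L : Set B} {w u : W} (hu : inCosetR cs L w u)
    (hmin : ∀ g, inCosetR cs L w g → ℓ u ≤ ℓ g) :
    ∀ v ∈ parab cs L, ℓ (u * v) = ℓ u + ℓ v := by
  suffices H : ∀ n, ∀ v ∈ parab cs L, ℓ v ≤ n → ℓ (u * v) = ℓ u + ℓ v by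
    intro v hv
    exact H (ℓ v) v hv le_rfl
  intro n
  induction n with
  | zero =>
    intro v hv hl
    have h1 : v = 1 := cs.length_eq_zero_iff.mp (Nat.le_zero.mp hl)
    subst h1; simp
  | succ n ih =>
    intro v hv hl
    by_cases hv1 : v = 1
    · subst hv1; simp
    obtain ⟨i, hiL, v', hv', rfl, hlv⟩ := parab_right_descent cs hv hv1
    have ihv : ℓ (u * v') = ℓ u + ℓ v' := ih v' hv' (by omega)
    rw [← mul_assoc]
    rcases cs.length_mul_simple (u * v') i with hcase | hcase
    · omega
    · exfalso
      obtain ⟨α, hαred, hαprod⟩ := cs.exists_reduced_word' u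
      obtain ⟨β, hβL, hβred, hβprod⟩ := exists_reduced_word_parab cs hv'
      have hπ : π (α ++ β) = u * v' := by rw [cs.wordProd_append, ← hαprod, hβprod]
      have hlα : ℓ u = α.length := by rw [hαprod]; exact hαred
      have hlβ : ℓ v' = β.length := by rw [← hβprod]; exact hβred
      have hlt : ℓ (π (α ++ β) * s i) < ℓ (π (α ++ β)) := by rw [hπ]; omega
      obtain ⟨j, hj, heq⟩ := strong_exchange cs (α ++ β) (s i) (cs.isReflection_simple i) hlt
      rw [List.length_append] at hj
      rw [hπ] at heq
      by_cases hjα : j < α.length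
      · rw [List.eraseIdx_append_of_lt_length hjα, cs.wordProd_append, hβprod] at heq
        set ut := π (α.eraseIdx j) with hut
        -- ut = u * (v' * s i * v'⁻¹) ∈ coset of w
        have h0 : ut = u * (v' * s i * v'⁻¹) := by
          have h0' : ut = u * v' * s i * v'⁻¹ := eq_mul_inv_of_mul_eq heq.symm
          rw [h0']; group
        have hcos : inCosetR cs L w ut := by
          obtain ⟨v₀, hv₀, hwv₀⟩ := hu
          refine ⟨v₀ * (v' * s i * v'⁻¹), ?_, ?_⟩
          · exact mul_mem hv₀ (mul_mem (mul_mem hv' (simple_mem_parab cs hiL)) (inv_mem hv'))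
          · rw [← mul_assoc, hwv₀, ← h0]
        have hub := cs.length_wordProd_le (α.eraseIdx j)
        have hlen2 := List.length_eraseIdx_add_one hjα
        have := hmin ut hcos
        rw [← hut] at hub
        omega
      · have hjge : α.length ≤ j := not_lt.mp hjα
        rw [List.eraseIdx_append_of_length_le hjge, cs.wordProd_append, ← hαprod] at heq
        have h1 : v' * s i = π (β.eraseIdx (j - α.length)) := by
          have h2 := heq
          rw [mul_assoc] at h2
          exact mul_left_cancel h2
        have hub := cs.length_wordProd_le (β.eraseIdx (j - α.length))
        have hlen2 := List.length_eraseIdx_add_one (show j - α.length < β.length by omega)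
        rw [← h1] at hub
        omega

lemma exists_minReps_decomp (L : Set B) (w : W) :
    ∃ u v, u ∈ minReps cs L ∧ v ∈ parab cs L ∧ w = u * v ∧ ℓ w = ℓ u + ℓ v := by
  obtain ⟨u, hu, hmin⟩ := exists_min_coset cs L w
  have hu2 := hu
  obtain ⟨v₀, hv₀, hwv₀⟩ := hu2
  refine ⟨u, v₀⁻¹, ?_, inv_mem hv₀, ?_, ?_⟩
  · intro i hi
    have h1 := min_coset_add cs hu hmin (s i) (simple_mem_parab cs hi)
    rw [h1, cs.length_simple]
    omega
  · rw [← hwv₀]; group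
  · have h1 := min_coset_add cs hu hmin v₀⁻¹ (inv_mem hv₀)
    rw [(by rw [← hwv₀]; group : w = u * v₀⁻¹), h1]

lemma minReps_min {L : Set B} {u : W} (hu : u ∈ minReps cs L) :
    ∀ g, inCosetR cs L u g → ℓ u ≤ ℓ g := by
  obtain ⟨u₀, hu₀, hmin⟩ := exists_min_coset cs L u
  have hu02 := hu₀
  obtain ⟨v₀, hv₀, hv₀eq⟩ := hu02
  -- u = u₀ * v₀⁻¹
  have hueq : u = u₀ * v₀⁻¹ := by rw [← hv₀eq]; group
  have hadd := min_coset_add cs hu₀ hmin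
  have hv1 : v₀⁻¹ = 1 := by
    by_contra hne
    obtain ⟨i, hiL, v', hv', hveq, hlv⟩ := parab_right_descent cs (inv_mem hv₀) hne
    have h1 : u * s i = u₀ * v' := by
      rw [hueq, hveq]
      have : s i * s i = 1 := cs.simple_mul_simple_self i
      calc u₀ * (v' * s i) * s i = u₀ * v' * (s i * s i) := by group
        _ = u₀ * v' := by rw [this, mul_one]
    have h2 : ℓ (u * s i) = ℓ u₀ + ℓ v' := by rw [h1]; exact hadd v' hv'
    have h3 : ℓ u = ℓ u₀ + ℓ v' + 1 := by
      rw [hueq, hadd v₀⁻¹ (inv_mem hv₀)]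
      omega
    have h4 := hu i hiL
    omega
  have hv0 : v₀ = 1 := inv_eq_one.mp hv1
  rw [hv0, mul_one] at hv₀eq
  intro g hg
  rw [hv₀eq]
  exact hmin g hg

lemma minReps_add {L : Set B} {u : W} (hu : u ∈ minReps cs L) :
    ∀ v ∈ parab cs L, ℓ (u * v) = ℓ u + ℓ v :=
  min_coset_add cs ⟨1, one_mem _, mul_one u⟩ (minReps_min cs hu)

lemma minReps_decomp_unique {L : Set B} {a e b m : W} (ha : a ∈ minReps cs L)
    (he : e ∈ minReps cs L) (hb : b ∈ parab cs L) (hm : m ∈ parab cs L)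
    (heq : a * b = e * m) : a = e ∧ b = m := by
  have h1 : e⁻¹ * a = m * b⁻¹ := by
    have h0 : e⁻¹ * (a * b) = m := by rw [heq]; group
    rw [← h0]; group
  have h2 : e⁻¹ * a ∈ parab cs L := by rw [h1]; exact mul_mem hm (inv_mem hb)
  have h3 : a⁻¹ * e ∈ parab cs L := by
    have : a⁻¹ * e = (e⁻¹ * a)⁻¹ := by group
    rw [this]; exact inv_mem h2
  have h4 : ℓ a = ℓ e + ℓ (e⁻¹ * a) := by
    have := minReps_add cs he (e⁻¹ * a) h2
    rw [(by group : e * (e⁻¹ * a) = a)] at this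
    exact this
  have h5 : ℓ e = ℓ a + ℓ (a⁻¹ * e) := by
    have := minReps_add cs ha (a⁻¹ * e) h3
    rw [(by group : a * (a⁻¹ * e) = e)] at this
    exact this
  have h6 : ℓ (e⁻¹ * a) = 0 := by omega
  have h7 : a = e := by
    have h8 := cs.length_eq_zero_iff.mp h6
    have : a = e * (e⁻¹ * a) := by group
    rw [this, h8, mul_one]
  refine ⟨h7, ?_⟩
  subst h7
  exact mul_left_cancel heq

/-! ### Consequences of GoodSetup -/

section Sigma

variable {I J K : Set B} {σ : W → W} (h : GoodSetup cs I J K σ)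
include h

lemma sigma_one : σ 1 = 1 := by
  have h1 := h.mulSigma 1 (one_mem _) 1 (one_mem _)
  rw [mul_one] at h1
  exact (left_eq_mul.mp h1)

lemma sigma_mem {x : W} (hx : x ∈ parab cs I) : σ x ∈ parab cs J := h.bijSigma.mapsTo hx

lemma sigma_word (ω : List B) (hmem : ∀ b ∈ ω, b ∈ I) :
    ∃ ωJ : List B, (∀ b ∈ ωJ, b ∈ J ∧ ∃ i ∈ I, σ (cs.simple i) = cs.simple b) ∧
      ωJ.length = ω.length ∧ σ (π ω) = π ωJ := by
  induction ω with
  | nil =>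
    refine ⟨[], by simp, rfl, ?_⟩
    show σ (π []) = π []
    rw [cs.wordProd_nil]
    exact sigma_one cs h
  | cons i ω ih =>
    obtain ⟨ωJ, h1, h2, h3⟩ := ih fun b hb => hmem b (List.mem_cons_of_mem _ hb)
    have hiI : i ∈ I := hmem i List.mem_cons_self
    obtain ⟨j, hj, hsj⟩ := h.simpleSigma i hiI
    refine ⟨j :: ωJ, ?_, by simp [h2], ?_⟩
    · intro b hb
      rcases List.mem_cons.mp hb with rfl | hb
      · exact ⟨hj, i, hiI, hsj⟩
      · exact h1 b hb
    · rw [cs.wordProd_cons, cs.wordProd_cons,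
        h.mulSigma (s i) (simple_mem_parab cs hiI) (π ω)
          (wordProd_mem_parab cs fun b hb => hmem b (List.mem_cons_of_mem _ hb)),
        hsj, h3]

lemma sigma_length_le {x : W} (hx : x ∈ parab cs I) : ℓ (σ x) ≤ ℓ x := by
  obtain ⟨ω, hωI, hred, hπ⟩ := exists_reduced_word_parab cs hx
  obtain ⟨ωJ, _, hlen, hσw⟩ := sigma_word cs h ω hωI
  rw [← hπ, hσw]
  calc ℓ (π ωJ) ≤ ωJ.length := cs.length_wordProd_le ωJ
    _ = ω.length := hlen
    _ = ℓ (π ω) := hred.symm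

lemma sigma_simple_surj : ∀ j ∈ J, ∃ i ∈ I, σ (cs.simple i) = cs.simple j := by
  intro j hj
  obtain ⟨x, hx, hσx⟩ := h.bijSigma.surjOn (simple_mem_parab cs hj)
  obtain ⟨ω, hωI, hπ⟩ := exists_word_parab cs hx
  obtain ⟨ωJ, hJ', _, hσw⟩ := sigma_word cs h ω hωI
  have hsj : π ωJ = s j := by rw [← hσw, hπ, hσx]
  obtain ⟨ω', hsub, hred, hprod⟩ := exists_reduced_sublist cs ωJ
  have hl1 : ω'.length = 1 := by
    have := hred
    rw [CoxeterSystem.IsReduced, hprod, hsj, cs.length_simple] at this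
    omega
  obtain ⟨b, rfl⟩ := List.length_eq_one_iff.mp hl1
  have hb := hJ' b (hsub.subset (List.mem_singleton_self b))
  obtain ⟨_, i, hiI, hσi⟩ := hb
  refine ⟨i, hiI, ?_⟩
  rw [hσi, ← cs.wordProd_singleton, hprod, hsj]

lemma sigma_surj_with_len {y : W} (hy : y ∈ parab cs J) :
    ∃ x ∈ parab cs I, σ x = y ∧ ℓ x ≤ ℓ y := by
  obtain ⟨ω, hωJ, hred, hπ⟩ := exists_reduced_word_parab cs hy
  suffices H : ∀ ω : List B, (∀ b ∈ ω, b ∈ J) →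
      ∃ x ∈ parab cs I, σ x = π ω ∧ ℓ x ≤ ω.length by
    obtain ⟨x, hx, hσ, hl⟩ := H ω hωJ
    exact ⟨x, hx, by rw [hσ, hπ], by rw [← hπ] at *; exact le_of_le_of_eq hl hred.symm⟩
  intro ω
  induction ω with
  | nil =>
    intro _
    exact ⟨1, one_mem _, by rw [cs.wordProd_nil]; exact sigma_one cs h, by simp⟩
  | cons b ω ih =>
    intro hmem
    obtain ⟨x', hx', hσ', hl'⟩ := ih fun c hc => hmem c (List.mem_cons_of_mem _ hc)
    obtain ⟨i, hiI, hσi⟩ := sigma_simple_surj cs h b (hmem b List.mem_cons_self)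
    refine ⟨s i * x', mul_mem (simple_mem_parab cs hiI) hx', ?_, ?_⟩
    · rw [h.mulSigma (s i) (simple_mem_parab cs hiI) x' hx', hσi, hσ', cs.wordProd_cons]
    · calc ℓ (s i * x') ≤ ℓ (s i) + ℓ x' := cs.length_mul_le _ _
        _ = 1 + ℓ x' := by rw [cs.length_simple]
        _ ≤ 1 + ω.length := by omega
        _ = (b :: ω).length := by simp [Nat.add_comm]

lemma sigma_length {x : W} (hx : x ∈ parab cs I) : ℓ (σ x) = ℓ x := by
  have h1 := sigma_length_le cs h hx
  obtain ⟨x', hx', hσ', hl'⟩ := sigma_surj_with_len cs h (sigma_mem cs h hx)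
  have h2 : x' = x := h.bijSigma.injOn hx' hx hσ'
  subst h2
  omega

lemma simple_ne_one (b : B) : s b ≠ 1 := by
  intro h1
  have h2 := cs.length_simple b
  rw [h1, cs.length_one] at h2
  omega

lemma simple_notin_I : ∀ b ∈ J ∪ K, cs.simple b ∉ parab cs I := by
  rintro b (hb | hb) hmem
  · have h1 := h.directProd (s b) hmem (s b) (simple_mem_parab cs hb) 1 (one_mem _)
      (by rw [mul_one, cs.simple_mul_simple_self])
    exact simple_ne_one cs h b h1.1
  · have h1 := h.directProd (s b) hmem 1 (one_mem _) (s b) (simple_mem_parab cs hb)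
      (by rw [mul_one, cs.simple_mul_simple_self])
    exact simple_ne_one cs h b h1.1

lemma simple_notin_J : ∀ b ∈ K, cs.simple b ∉ parab cs J := by
  intro b hb hmem
  have h1 := h.directProd 1 (one_mem _) (s b) hmem (s b) (simple_mem_parab cs hb)
    (by rw [one_mul, cs.simple_mul_simple_self])
  exact simple_ne_one cs h b h1.2.1

lemma simple_notin_IJ : ∀ b ∈ K, cs.simple b ∉ parab cs (I ∪ J) := by
  intro b hb hmem
  obtain ⟨p, hp, q, hq, hpq⟩ := parab_union_split cs h.commIJ (s b) hmem
  have h1 : p * q * s b = 1 := by rw [← hpq, cs.simple_mul_simple_self]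
  have h2 := h.directProd p hp q hq (s b) (simple_mem_parab cs hb) h1
  exact simple_ne_one cs h b h2.2.2

end Sigma

end CoxAux

theorem statement_18 (cs : CoxeterSystem M W) (I J K : Set B) (σ : W → W)
    (h : GoodSetup cs I J K σ) (w y a b c d : W)
    (hwM : w ∈ Mset cs I J K σ)
    (ha : a ∈ minReps cs (I ∪ J ∪ K)) (hb : b ∈ parab cs (I ∪ J ∪ K))
    (hab : w = a * b) (hlab : cs.length w = cs.length a + cs.length b)
    (hc : c ∈ minReps cs (I ∪ J ∪ K)) (hd : d ∈ parab cs (I ∪ J ∪ K))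
    (hcd : y = c * d) (hlcd : cs.length y = cs.length c + cs.length d)
    (hR : leR cs d b) :
    y ∈ Mset cs I J K σ := by
  classical
  -- subset inclusions
  have hIL : I ⊆ I ∪ J ∪ K := Set.subset_union_left.trans Set.subset_union_left
  have hJL : J ⊆ I ∪ J ∪ K := Set.subset_union_right.trans Set.subset_union_left
  have hKL : K ⊆ I ∪ J ∪ K := Set.subset_union_right
  have hIJL : I ∪ J ⊆ I ∪ J ∪ K := Set.subset_union_left
  have hJKL : J ∪ K ⊆ I ∪ J ∪ K := Set.union_subset hJL hKL
  -- commutation packs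
  have hcIJ := h.commIJ
  have hcIJ_K : ∀ p ∈ I ∪ J, ∀ q ∈ K, Commute (cs.simple p) (cs.simple q) := by
    rintro p (hp | hp) q hq
    · exact h.commIK p hp q hq
    · exact h.commJK p hp q hq
  have hcI_JK : ∀ p ∈ I, ∀ q ∈ J ∪ K, Commute (cs.simple p) (cs.simple q) := by
    rintro p hp q (hq | hq)
    · exact h.commIJ p hp q hq
    · exact h.commIK p hp q hq
  have hcJK := h.commJK
  -- length additivity
  have addI_JK := CoxAux.length_add_of_disj cs hcI_JK (CoxAux.simple_notin_I cs h)
  have addIJ_K := CoxAux.length_add_of_disj cs hcIJ_K (CoxAux.simple_notin_IJ cs h)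
  have addJK := CoxAux.length_add_of_disj cs hcJK (CoxAux.simple_notin_J cs h)
  have addIJ : ∀ y2 ∈ parab cs J, ∀ x2 ∈ parab cs I,
      cs.length (x2 * y2) = cs.length x2 + cs.length y2 := by
    intro y2 hy2 x2 hx2
    exact addI_JK y2 (CoxAux.parab_mono cs Set.subset_union_left hy2) x2 hx2
  have add3 : ∀ x2 ∈ parab cs I, ∀ y2 ∈ parab cs J, ∀ z2 ∈ parab cs K,
      cs.length (x2 * y2 * z2) = cs.length x2 + cs.length y2 + cs.length z2 := by
    intro x2 hx2 y2 hy2 z2 hz2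
    have hxy : x2 * y2 ∈ parab cs (I ∪ J) :=
      mul_mem (CoxAux.parab_mono cs Set.subset_union_left hx2)
        (CoxAux.parab_mono cs Set.subset_union_right hy2)
    rw [addIJ_K z2 hz2 (x2 * y2) hxy, addIJ y2 hy2 x2 hx2]
  -- 1. unpack hwM
  obtain ⟨w1, hw1, hwMin⟩ := hwM
  have hw1c : inCoset cs I K σ w1 w := hwMin.1
  have hlw : cs.length w = cs.length w1 := hwMin.2
  obtain ⟨a₀, ha₀, x, hxI, hwe⟩ := hw1c
  -- 2. decompose w1 = e * t
  obtain ⟨e, t, heE, htL, hw1e, hl1⟩ := CoxAux.exists_minReps_decomp cs (I ∪ J ∪ K) w1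
  -- 3. components of t
  obtain ⟨t', ht', tk, htk, hte⟩ := CoxAux.parab_union_split cs hcIJ_K t htL
  obtain ⟨ti, hti, tj, htj, hte2⟩ := CoxAux.parab_union_split cs hcIJ t' ht'
  have htfull : t = ti * (tj * tk) := by rw [hte, hte2]; group
  have hujk : tj * tk ∈ parab cs (J ∪ K) :=
    mul_mem (CoxAux.parab_mono cs Set.subset_union_left htj)
      (CoxAux.parab_mono cs Set.subset_union_right htk)
  have hujk1 : tj * tk = 1 := by
    by_contra hne
    obtain ⟨m, hm, u', hu', hueq, hlu⟩ := CoxAux.parab_right_descent cs hujk hne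
    have h1 : w1 * cs.simple m = e * (ti * u') := by
      rw [hw1e, htfull, hueq]
      have hss := cs.simple_mul_simple_self m
      calc e * (ti * (u' * cs.simple m)) * cs.simple m
          = e * (ti * (u' * (cs.simple m * cs.simple m))) := by group
        _ = e * (ti * u') := by rw [hss, mul_one]
    have h2 : ti * u' ∈ parab cs (I ∪ J ∪ K) :=
      mul_mem (CoxAux.parab_mono cs hIL hti) (CoxAux.parab_mono cs hJKL hu')
    have h3 : cs.length (w1 * cs.simple m) = cs.length e + (cs.length ti + cs.length u') := by
      rw [h1, CoxAux.minReps_add cs heE _ h2, addI_JK u' hu' ti hti]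
    have h4 : cs.length t = cs.length ti + cs.length (tj * tk) := by
      rw [htfull]
      exact addI_JK (tj * tk) hujk ti hti
    have h5 := hw1 m hm
    omega
  have httk : t = ti := by rw [htfull, hujk1, mul_one]
  -- 5. length equation
  have hσxJ : σ x ∈ parab cs J := CoxAux.sigma_mem cs h hxI
  have hcomm_xa : Commute a₀ x := (CoxAux.parab_commute cs h.commIK x hxI a₀ ha₀).symm
  have hcomm_sa : Commute a₀ (σ x) := (CoxAux.parab_commute cs h.commJK (σ x) hσxJ a₀ ha₀).symm
  have hwfull : w = e * (ti * x * σ x * a₀) := by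
    rw [hwe, hw1e, httk]
    calc e * ti * a₀ * (x * σ x) = e * ti * (a₀ * x * σ x) := by group
      _ = e * ti * (x * a₀ * σ x) := by rw [hcomm_xa.eq]
      _ = e * ti * (x * (a₀ * σ x)) := by group
      _ = e * ti * (x * (σ x * a₀)) := by rw [hcomm_sa.eq]
      _ = e * (ti * x * σ x * a₀) := by group
  have htix : ti * x ∈ parab cs I := mul_mem hti hxI
  have hm1IJ : ti * x * σ x ∈ parab cs (I ∪ J) :=
    mul_mem (CoxAux.parab_mono cs Set.subset_union_left htix)
      (CoxAux.parab_mono cs Set.subset_union_right hσxJ)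
  have hm1L : ti * x * σ x * a₀ ∈ parab cs (I ∪ J ∪ K) :=
    mul_mem (CoxAux.parab_mono cs hIJL hm1IJ) (CoxAux.parab_mono cs hKL ha₀)
  have hlw2 : cs.length w
      = cs.length e + (cs.length (ti * x) + cs.length (σ x) + cs.length a₀) := by
    rw [hwfull, CoxAux.minReps_add cs heE _ hm1L]
    congr 1
    rw [addIJ_K a₀ ha₀ _ hm1IJ, addIJ (σ x) hσxJ _ htix]
  have hlw1e : cs.length w1 = cs.length e + cs.length ti := by rw [hl1, httk]
  have hσlen : cs.length (σ x) = cs.length x := CoxAux.sigma_length cs h hxI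
  have htri : cs.length ti ≤ cs.length (ti * x) + cs.length x := by
    have h1 := cs.length_mul_le (ti * x) x⁻¹
    rw [mul_inv_cancel_right, cs.length_inv] at h1
    exact h1
  have ha₀0 : cs.length a₀ = 0 := by omega
  have ha₀1 : a₀ = 1 := cs.length_eq_zero_iff.mp ha₀0
  have heqt : cs.length ti = cs.length (ti * x) + cs.length x := by omega
  -- 6. uniqueness of the decomposition of w
  have hweq2 : a * b = e * (ti * x * σ x) := by
    rw [← hab, hwfull, ha₀1, mul_one]
  obtain ⟨hae, hbm⟩ := CoxAux.minReps_decomp_unique cs ha heE hb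
    (CoxAux.parab_mono cs hIJL hm1IJ) hweq2
  -- 7. components of d
  obtain ⟨d', hd', d3, hd3K, hdeq⟩ := CoxAux.parab_union_split cs hcIJ_K d hd
  obtain ⟨d1, hd1, d2, hd2, hdeq2⟩ := CoxAux.parab_union_split cs hcIJ d' hd'
  have hdfull : d = d1 * d2 * d3 := by rw [hdeq, hdeq2]
  -- 8. use the right weak order hypothesis
  have hAI : ti * x * d1⁻¹ ∈ parab cs I := mul_mem htix (inv_mem hd1)
  have hBJ : σ x * d2⁻¹ ∈ parab cs J := mul_mem hσxJ (inv_mem hd2)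
  have cK2 : Commute (d2⁻¹ * d1⁻¹) d3⁻¹ :=
    CoxAux.parab_commute cs hcIJ_K _
      (mul_mem (CoxAux.parab_mono cs Set.subset_union_right (inv_mem hd2))
        (CoxAux.parab_mono cs Set.subset_union_left (inv_mem hd1)))
      _ (inv_mem hd3K)
  have cJ1 : Commute d1⁻¹ (σ x * d2⁻¹) :=
    CoxAux.parab_commute cs hcIJ _ (inv_mem hd1) _ hBJ
  have hbd : b * d⁻¹ = ti * x * d1⁻¹ * (σ x * d2⁻¹) * d3⁻¹ := by
    calc b * d⁻¹ = ti * x * σ x * (d3⁻¹ * (d2⁻¹ * d1⁻¹)) := by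
          rw [hbm, hdfull]; group
      _ = ti * x * σ x * (d2⁻¹ * d1⁻¹ * d3⁻¹) := by rw [← cK2.eq]
      _ = ti * x * (σ x * d2⁻¹ * d1⁻¹) * d3⁻¹ := by group
      _ = ti * x * (d1⁻¹ * (σ x * d2⁻¹)) * d3⁻¹ := by rw [cJ1.eq]
      _ = ti * x * d1⁻¹ * (σ x * d2⁻¹) * d3⁻¹ := by group
  have hlbd : cs.length (b * d⁻¹)
      = cs.length (ti * x * d1⁻¹) + cs.length (σ x * d2⁻¹) + cs.length d3 := by
    rw [hbd, add3 _ hAI _ hBJ _ (inv_mem hd3K), cs.length_inv]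
  have hld : cs.length d = cs.length d1 + cs.length d2 + cs.length d3 := by
    rw [hdfull]; exact add3 _ hd1 _ hd2 _ hd3K
  have hlb : cs.length b = cs.length (ti * x) + cs.length (σ x) := by
    rw [hbm]; exact addIJ (σ x) hσxJ _ htix
  have tri1 : cs.length (ti * x) ≤ cs.length (ti * x * d1⁻¹) + cs.length d1 := by
    have h1 := cs.length_mul_le (ti * x * d1⁻¹) d1
    rwa [inv_mul_cancel_right] at h1
  have tri2 : cs.length (σ x) ≤ cs.length (σ x * d2⁻¹) + cs.length d2 := by
    have h1 := cs.length_mul_le (σ x * d2⁻¹) d2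
    rwa [inv_mul_cancel_right] at h1
  have hRineq : cs.length b = cs.length (b * d⁻¹) + cs.length d := hR
  have hd30 : cs.length d3 = 0 := by omega
  have hd31 : d3 = 1 := cs.length_eq_zero_iff.mp hd30
  have heq1 : cs.length (ti * x) = cs.length (ti * x * d1⁻¹) + cs.length d1 := by omega
  have heq2 : cs.length (σ x) = cs.length (σ x * d2⁻¹) + cs.length d2 := by omega
  -- 9. pull back d2 and σx·d2⁻¹ along σ
  obtain ⟨z, hzI, hσz, hzle⟩ := CoxAux.sigma_surj_with_len cs h hd2
  have hzlen : cs.length z = cs.length d2 := by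
    have h1 := CoxAux.sigma_length cs h hzI
    rw [hσz] at h1
    omega
  obtain ⟨q, hqI, hσq, hqle⟩ := CoxAux.sigma_surj_with_len cs h hBJ
  have hqlen : cs.length q = cs.length (σ x * d2⁻¹) := by
    have h1 := CoxAux.sigma_length cs h hqI
    rw [hσq] at h1
    omega
  have hxqz : q * z = x := by
    apply h.bijSigma.injOn (mul_mem hqI hzI) hxI
    rw [h.mulSigma q hqI z hzI, hσq, hσz, inv_mul_cancel_right]
  have hlx : cs.length x = cs.length q + cs.length z := by omega
  -- 10. the witness
  have hg'I : d1 * z⁻¹ ∈ parab cs I := mul_mem hd1 (inv_mem hzI)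
  have hg'L : d1 * z⁻¹ ∈ parab cs (I ∪ J ∪ K) := CoxAux.parab_mono cs hIL hg'I
  have hti_decomp : ti = ti * x * d1⁻¹ * (d1 * z⁻¹) * q⁻¹ := by
    rw [← hxqz]; group
  have hlow : cs.length ti
      ≤ cs.length (ti * x * d1⁻¹) + cs.length (d1 * z⁻¹) + cs.length q := by
    have h1 := cs.length_mul_le (ti * x * d1⁻¹ * (d1 * z⁻¹)) q⁻¹
    rw [← hti_decomp, cs.length_inv] at h1
    have h2 := cs.length_mul_le (ti * x * d1⁻¹) (d1 * z⁻¹)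
    omega
  have hg'up : cs.length (d1 * z⁻¹) ≤ cs.length d1 + cs.length z := by
    have h1 := cs.length_mul_le d1 z⁻¹
    rwa [cs.length_inv] at h1
  have hg'len : cs.length (d1 * z⁻¹) = cs.length d1 + cs.length z := by omega
  have he'min : c * (d1 * z⁻¹) ∈ minReps cs (J ∪ K) := by
    intro m hm
    have hsmL : cs.simple m ∈ parab cs (J ∪ K) := CoxAux.simple_mem_parab cs hm
    have h1 : cs.length (c * (d1 * z⁻¹) * cs.simple m)
        = cs.length c + (cs.length (d1 * z⁻¹) + 1) := by
      rw [mul_assoc c (d1 * z⁻¹) (cs.simple m),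
        CoxAux.minReps_add cs hc _ (mul_mem hg'L (CoxAux.parab_mono cs hJKL hsmL))]
      congr 1
      rw [addI_JK (cs.simple m) hsmL _ hg'I, cs.length_simple]
    have h2 : cs.length (c * (d1 * z⁻¹)) = cs.length c + cs.length (d1 * z⁻¹) :=
      CoxAux.minReps_add cs hc _ hg'L
    omega
  have hyfull : y = c * (d1 * z⁻¹) * 1 * (z * σ z) := by
    rw [hcd, hdfull, hd31, hσz, mul_one]
    group
  have hylen : cs.length y = cs.length (c * (d1 * z⁻¹)) := by
    have h1 : cs.length y = cs.length c + cs.length d := by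
      rw [hcd]; exact CoxAux.minReps_add cs hc d hd
    have h2 := CoxAux.minReps_add cs hc _ hg'L
    omega
  exact ⟨c * (d1 * z⁻¹), he'min, ⟨⟨1, one_mem _, z, hzI, hyfull⟩, hylen⟩⟩

end BruhatSetup
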